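/- Let B be a Banach space, Φ its projective space, and f : Φ → ℝ continuous. Then no value t with hs₁ < t < hs₂ is homotopy significant; i.e., the only homotopy significant eigenvalue of f below hs₂ is hs₁. -/

import Mathlib

open Set Metric Topology unitInterval

noncomputable section
open Classical

variable {B : Type*} [NormedAddCommGroup B] [NormedSpace ℝ B]

/-- There exists a continuous, odd, nonvanishing map `A → ℝ^m \ {0}`. -/
def HasOddMap (A : Set B) (m : ℕ) : Prop :=
  ∃ h : A → (Fin m → ℝ), Continuous h ∧ (∀ x, h x ≠ 0) ∧
    ∀ (x : A) (hx : -(x : B) ∈ A), h ⟨-(x : B), hx⟩ = -h x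

/-- Krasnoselskii genus. -/
def genus (A : Set B) : ℕ∞ :=
  if A = ∅ then 0 else sInf {m : ℕ∞ | ∃ k : ℕ, m = k ∧ HasOddMap A k}

/-- A set is contractible within the ambient space `Φ`. -/
def ContractibleIn {Φ : Type*} [TopologicalSpace Φ] (C : Set Φ) : Prop :=
  ∃ x₀ : Φ, ∃ H : C(↥C × ↥I, Φ),
    (∀ x : C, H (x, 0) = (x : Φ)) ∧ (∀ x : C, H (x, 1) = x₀)

/-- Lusternik–Schnirelmann subspace category (with closed covers). -/
def catLS {Φ : Type*} [TopologicalSpace Φ] (A : Set Φ) : ℕ∞ :=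
  sInf {m : ℕ∞ | ∃ k : ℕ, m = k ∧ ∃ C : Fin k → Set Φ,
    (∀ i, IsClosed (C i)) ∧ (∀ i, ContractibleIn (C i)) ∧ A ⊆ ⋃ i, C i}

/-- `X` can be brought to `Y` via a homotopy in `Φ` starting from the inclusion. -/
def BringsTo {Φ : Type*} [TopologicalSpace Φ] (X Y : Set Φ) : Prop :=
  ∃ H : C(↥X × ↥I, Φ),
    (∀ x : X, H (x, 0) = (x : Φ)) ∧ (∀ x : X, H (x, 1) ∈ Y)

/-- `a` lies in the homotopy significant spectrum of `f`. -/
def HomotopySignificant {Φ : Type*} [TopologicalSpace Φ] (f : Φ → ℝ) (a : ℝ) : Prop :=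
  ¬ BringsTo {x | f x ≤ a} {x | f x < a}

/-- `e` is a weak homotopy significant eigenvalue of `f`. -/
def WeakHomotopySignificant {Φ : Type*} [TopologicalSpace Φ] (f : Φ → ℝ) (e : ℝ) : Prop :=
  ∀ t₁ > e, ∀ t₂ < e, ¬ BringsTo {x | f x ≤ t₁} {x | f x ≤ t₂}

/-- The k-th Krasnoselskii eigenvalue of (the restriction to the unit sphere of) `f`. -/
def kr (f : B → ℝ) (k : ℕ) : EReal :=
  ⨅ A ∈ {A : Set B | A ⊆ sphere (0 : B) 1 ∧ IsClosed A ∧ A = -A ∧ (k : ℕ∞) ≤ genus A},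
    ⨆ x ∈ A, (f x : EReal)

/-- The k-th category (min-max) eigenvalue of `f`. -/
def hs {Φ : Type*} [TopologicalSpace Φ] (f : Φ → ℝ) (k : ℕ) : EReal :=
  ⨅ A ∈ {A : Set Φ | IsClosed A ∧ (k : ℕ∞) ≤ catLS A}, ⨆ x ∈ A, (f x : EReal)

/-- The antipodal setoid on the unit sphere of `B`. -/
def projSetoid (B : Type*) [NormedAddCommGroup B] [NormedSpace ℝ B] :
    Setoid ↥(sphere (0 : B) 1) where
  r x y := (x : B) = y ∨ (x : B) = -(y : B)
  iseqv := by
    constructor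
    · intro x; exact Or.inl rfl
    · rintro x y (h | h)
      · exact Or.inl h.symm
      · exact Or.inr (by rw [h, neg_neg])
    · rintro x y z (h | h) (h' | h')
      · exact Or.inl (h.trans h')
      · exact Or.inr (by rw [h, h'])
      · exact Or.inr (by rw [h, h'])
      · exact Or.inl (by rw [h, h', neg_neg])

/-- The projective space of `B`, as the quotient of the unit sphere by the antipodal map. -/
def Proj (B : Type*) [NormedAddCommGroup B] [NormedSpace ℝ B] := Quotient (projSetoid B)

instance : TopologicalSpace (Proj B) := instTopologicalSpaceQuotient


lemma joined_proj (a b : Quotient (projSetoid B)) :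
    Joined a b := by
  obtain ⟨x, rfl⟩ := Quotient.exists_rep a
  obtain ⟨y, rfl⟩ := Quotient.exists_rep b
  by_cases hxy : (x : B) = -(y : B)
  · have : (⟦x⟧ : Quotient (projSetoid B)) = ⟦y⟧ := Quotient.sound (Or.inr hxy)
    rw [this]
  · have hx1 : ‖(x : B)‖ = 1 := by
      have := x.2; rwa [mem_sphere_zero_iff_norm] at this
    have hy1 : ‖(y : B)‖ = 1 := by
      have := y.2; rwa [mem_sphere_zero_iff_norm] at this
    set u : I → B := fun s => (1 - (s : ℝ)) • (x : B) + (s : ℝ) • (y : B) with hu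
    have hune : ∀ s : I, u s ≠ 0 := by
      intro s hs0
      have h1 : (1 - (s : ℝ)) • (x : B) = -((s : ℝ) • (y : B)) :=
        eq_neg_of_add_eq_zero_left hs0
      have hn : ‖(1 - (s : ℝ)) • (x : B)‖ = ‖(s : ℝ) • (y : B)‖ := by rw [h1, norm_neg]
      rw [norm_smul, norm_smul, hx1, hy1, mul_one, mul_one, Real.norm_eq_abs,
        Real.norm_eq_abs, abs_of_nonneg (by linarith [s.2.2] : (0:ℝ) ≤ 1 - (s:ℝ)),
        abs_of_nonneg s.2.1] at hn
      have h12 : (s : ℝ) = 1 / 2 := by linarith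
      rw [h12] at h1
      apply hxy
      have h2' : (1 / 2 : ℝ) • (x : B) = (1 / 2 : ℝ) • (-(y : B)) := by
        rw [smul_neg]; convert h1 using 2; norm_num
      exact smul_right_injective B (by norm_num : (1/2 : ℝ) ≠ 0) h2'
    set v : I → B := fun s => ‖u s‖⁻¹ • u s with hv
    have hvmem : ∀ s, v s ∈ sphere (0 : B) 1 := by
      intro s
      rw [mem_sphere_zero_iff_norm, hv]
      simp only [norm_smul, norm_inv, norm_norm]
      rw [inv_mul_cancel₀ (norm_ne_zero_iff.mpr (hune s))]
    have hcu : Continuous u := by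
      apply Continuous.add
      · exact (continuous_const.sub continuous_subtype_val).smul continuous_const
      · exact continuous_subtype_val.smul continuous_const
    have hcv : Continuous v :=
      ((hcu.norm.inv₀ fun s => norm_ne_zero_iff.mpr (hune s)).smul hcu)
    refine ⟨⟨⟨fun s => (⟦⟨v s, hvmem s⟩⟧ : Quotient (projSetoid B)), ?_⟩, ?_, ?_⟩⟩
    · exact continuous_quotient_mk'.comp (hcv.subtype_mk _)
    · apply Quotient.sound
      apply Or.inl
      show v 0 = (x : B)
      have hu0 : u 0 = (x : B) := by simp [hu]
      rw [hv]; simp only []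
      rw [hu0, hx1, inv_one, one_smul]
    · apply Quotient.sound
      apply Or.inl
      show v 1 = (y : B)
      have hu1 : u 1 = (y : B) := by simp [hu]
      rw [hv]; simp only []
      rw [hu1, hy1, inv_one, one_smul]

/-- No value strictly between `hs₁` and `hs₂` is homotopy significant: the only homotopy
significant eigenvalue below `hs₂` is `hs₁`. -/
theorem not_homotopySignificant_between_hs1_hs2 [CompleteSpace B]
    (f : Proj B → ℝ) (hf : Continuous f) (t : ℝ)
    (h1 : hs f 1 < (t : EReal)) (h2 : (t : EReal) < hs f 2) :
    ¬ HomotopySignificant f t := by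
  simp only [HomotopySignificant, not_not]
  -- Step A: a point y with f y < t
  rw [hs] at h1
  simp only [iInf_lt_iff, mem_setOf_eq] at h1
  obtain ⟨A, ⟨hAc, hAcat⟩, hAsup⟩ := h1
  have hAne : A.Nonempty := by
    by_contra hne
    rw [not_nonempty_iff_eq_empty] at hne
    subst hne
    have h0 : (0 : ℕ∞) ∈ {m : ℕ∞ | ∃ k : ℕ, m = k ∧ ∃ C : Fin k → Set (Proj B),
        (∀ i, IsClosed (C i)) ∧ (∀ i, ContractibleIn (C i)) ∧ (∅ : Set (Proj B)) ⊆ ⋃ i, C i} := by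
      exact ⟨0, by simp, Fin.elim0, fun i => i.elim0, fun i => i.elim0, by simp⟩
    have : catLS (∅ : Set (Proj B)) ≤ 0 := sInf_le h0
    have := le_trans hAcat this
    simp at this
  obtain ⟨y, hy⟩ := hAne
  have hyt : f y < t := by
    have : (f y : EReal) ≤ ⨆ x ∈ A, (f x : EReal) := le_biSup (fun x => ((f x : ℝ) : EReal)) hy
    exact EReal.coe_lt_coe_iff.mp (lt_of_le_of_lt this hAsup)
  -- Step B: catLS of the sublevel set is < 2
  set S : Set (Proj B) := {x | f x ≤ t} with hS
  have hSc : IsClosed S := isClosed_le hf continuous_const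
  have hcat : catLS S < 2 := by
    rw [lt_iff_not_ge]
    intro hle
    have hmem : S ∈ {A : Set (Proj B) | IsClosed A ∧ (2 : ℕ∞) ≤ catLS A} := ⟨hSc, by exact_mod_cast hle⟩
    have h1' : hs f 2 ≤ ⨆ x ∈ S, (f x : EReal) := iInf₂_le S hmem
    have h2' : ⨆ x ∈ S, (f x : EReal) ≤ (t : EReal) :=
      iSup₂_le fun x hx => EReal.coe_le_coe_iff.mpr hx
    exact absurd (lt_of_le_of_lt (h1'.trans h2') h2) (lt_irrefl _)
  rw [catLS, sInf_lt_iff] at hcat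
  obtain ⟨m, hm, hm2⟩ := hcat
  obtain ⟨k, rfl, C, hCc, hCcontr, hScover⟩ := hm
  have hk2 : k < 2 := by exact_mod_cast hm2
  interval_cases k
  · -- S is empty
    have hSe : S = ∅ := by
      have := hScover
      simpa using this
    haveI : IsEmpty ↥S := Set.isEmpty_coe_sort.mpr hSe
    exact ⟨⟨fun p => isEmptyElim p.1,
        continuous_iff_continuousAt.mpr fun p => isEmptyElim p.1⟩,
      fun x => isEmptyElim x, fun x => isEmptyElim x⟩
  · -- S is contained in a contractible closed set
    have hsub : S ⊆ C 0 := fun x hx => by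
      have := hScover hx
      simpa [Fin.exists_fin_one] using this
    obtain ⟨x₀, H, H0, H1⟩ := hCcontr 0
    obtain ⟨γ⟩ := joined_proj (B := B) x₀ y
    let incl : C(↥S, Proj B) := ⟨fun x => (x : Proj B), continuous_subtype_val⟩
    let Hom1 : incl.Homotopy (ContinuousMap.const ↥S x₀) :=
      { toFun := fun p => H (⟨⟨(p.2 : Proj B), hsub p.2.2⟩, p.1⟩)
        continuous_toFun := H.continuous.comp
          (((continuous_subtype_val.comp continuous_snd).subtype_mk _).prodMk continuous_fst)
        map_zero_left := fun x => H0 ⟨(x : Proj B), hsub x.2⟩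
        map_one_left := fun x => H1 ⟨(x : Proj B), hsub x.2⟩ }
    let Hom2 : (ContinuousMap.const ↥S x₀).Homotopy (ContinuousMap.const ↥S y) :=
      { toFun := fun p => γ.toFun p.1
        continuous_toFun := γ.continuous.comp continuous_fst
        map_zero_left := fun x => γ.source
        map_one_left := fun x => γ.target }
    let Hom := Hom1.trans Hom2
    refine ⟨⟨fun p => Hom (p.2, p.1),
      Hom.continuous.comp (continuous_snd.prodMk continuous_fst)⟩, ?_, ?_⟩
    · intro x
      exact Hom.apply_zero x
    · intro x
      show Hom (1, x) ∈ {x | f x < t}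
      rw [Hom.apply_one x]
      exact hyt

end
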